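/- Let q and r be probability distributions on a finite vocabulary V. Define the rejection-resampling procedure: sample x' ~ q, accept with probability min(1, r(x')/q(x')); if rejected, resample from the normalized residual distribution norm(max(0, r - q)). Then the output token is distributed exactly according to r. -/

import Mathlib

open Finset

/-- Rejection-resampling correctness: accept x'~q with prob min(1, r/q)
(interpreted so that q(x')·min(1, r(x')/q(x')) = min(q(x'), r(x'))), otherwise
resample from norm(max(0, r - q)). The output distribution is exactly r. -/
theorem speculative_sampling_correct
    (V : Type*) [Fintype V] [Nonempty V] (q r : V → ℝ)
    (hq0 : ∀ x, 0 ≤ q x) (hr0 : ∀ x, 0 ≤ r x)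
    (hq1 : ∑ x, q x = 1) (hr1 : ∑ x, r x = 1)
    (hden : 0 < ∑ y, max (r y - q y) 0) :
    ∀ x' : V,
      min (q x') (r x')
        + (∑ y, (q y - min (q y) (r y)))
            * (max (r x' - q x') 0 / ∑ y, max (r y - q y) 0)
      = r x' := by
  intro x'
  have hsum : (∑ y, (q y - min (q y) (r y))) = ∑ y, max (r y - q y) 0 := by
    have h1 : ∀ y : V, q y - min (q y) (r y) = max (q y - r y) 0 := by
      intro y; rcases le_total (q y) (r y) with h | h <;> simp [min_eq_left, min_eq_right, max_eq_left, max_eq_right, h] <;> linarith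
    have h2 : ∀ y : V, max (q y - r y) 0 - max (r y - q y) 0 = q y - r y := by
      intro y; rcases le_total (q y) (r y) with h | h <;>
        simp [max_eq_left, max_eq_right, sub_nonneg.2 h, sub_nonpos.2 h] <;> linarith
    calc (∑ y, (q y - min (q y) (r y))) = ∑ y, max (q y - r y) 0 := by
            exact Finset.sum_congr rfl fun y _ => h1 y
      _ = ∑ y, max (r y - q y) 0 := by
            have := Finset.sum_sub_distrib (s := (Finset.univ : Finset V))
              (f := fun y => max (q y - r y) 0) (g := fun y => max (r y - q y) 0)
            have h3 : (∑ y, (max (q y - r y) 0 - max (r y - q y) 0)) = 0 := by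
              calc (∑ y, (max (q y - r y) 0 - max (r y - q y) 0))
                  = ∑ y, (q y - r y) := Finset.sum_congr rfl fun y _ => h2 y
                _ = (∑ y, q y) - ∑ y, r y := Finset.sum_sub_distrib _ _
                _ = 0 := by rw [hq1, hr1]; ring
            rw [this] at h3; linarith
  rw [hsum, mul_comm, div_mul_cancel₀ _ (ne_of_gt hden)]
  rcases le_total (q x') (r x') with h | h <;>
    simp [min_eq_left, min_eq_right, max_eq_left, max_eq_right, sub_nonneg.2 h, sub_nonpos.2 h, h] <;> linarith
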